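/- Let n ≥ 1, let F be an n×n real matrix, and let P be an n×n real symmetric positive definite matrix satisfying Fᵀ·P·F − P = −I_n. Let λ_min(P) and λ_max(P) denote the smallest and largest eigenvalues of P, set λ = 1 − 1/(2·λ_max(P)) and β = ‖P‖ + 2·‖P·F‖², where ‖·‖ is the operator norm induced by the Euclidean norm on ℝⁿ. Let x, G : ℕ → ℝⁿ be sequences with x(t+1) = F·x(t) + G(t) for all t. Then for every t ∈ ℕ, ‖x(t)‖² ≤ λᵗ·λ_max(P)·‖x(0)‖²/λ_min(P) + (β/λ_min(P))·Σ_{l=0}^{t−1} λ^{t−1−l}·‖G(l)‖². -/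

import Mathlib

open Matrix

set_option maxHeartbeats 1000000 in
/-- Trajectory bound (inequality (26) of Lemma 3): for `x(t+1) = F x(t) + G(t)` with
`FᵀPF − P = −I`, `λ = 1 − 1/(2λ_max(P))`, `β = ‖P‖ + 2‖PF‖²`,
`‖x(t)‖² ≤ λᵗ λ_max(P) ‖x(0)‖²/λ_min(P) + (β/λ_min(P)) Σ_{l<t} λ^{t−1−l} ‖G(l)‖²`. -/
theorem trajectory_norm_bound
    (n : ℕ) (hn : 1 ≤ n)
    (F P : Matrix (Fin n) (Fin n) ℝ)
    (hPsymm : P.IsSymm) (hPpd : P.PosDef)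
    (hLyap : Fᵀ * P * F - P = -(1 : Matrix (Fin n) (Fin n) ℝ))
    (lamMin lamMax lam beta : ℝ)
    (hlamMin : IsLeast (spectrum ℝ P) lamMin)
    (hlamMax : IsGreatest (spectrum ℝ P) lamMax)
    (hlam : lam = 1 - 1 / (2 * lamMax))
    (hbeta : beta = ‖Matrix.toEuclideanCLM (𝕜 := ℝ) P‖ +
      2 * ‖Matrix.toEuclideanCLM (𝕜 := ℝ) (P * F)‖ ^ 2)
    (x G : ℕ → EuclideanSpace ℝ (Fin n))
    (hx : ∀ t, x (t + 1) = Matrix.toEuclideanCLM (𝕜 := ℝ) F (x t) + G t) :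
    ∀ t, ‖x t‖ ^ 2 ≤ lam ^ t * lamMax * ‖x 0‖ ^ 2 / lamMin +
      (beta / lamMin) * ∑ l ∈ Finset.range t, lam ^ (t - 1 - l) * ‖G l‖ ^ 2 := by
  haveI : NeZero n := ⟨by omega⟩
  classical
  set Pc := Matrix.toEuclideanCLM (𝕜 := ℝ) P with hPcdef
  set Fc := Matrix.toEuclideanCLM (𝕜 := ℝ) F with hFcdef
  set PFc := Matrix.toEuclideanCLM (𝕜 := ℝ) (P * F) with hPFcdef
  -- adjoint lemma
  have hadj : ∀ (A : Matrix (Fin n) (Fin n) ℝ) (u w : EuclideanSpace ℝ (Fin n)),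
      (inner ℝ (Matrix.toEuclideanCLM (𝕜 := ℝ) A u) w : ℝ)
        = inner ℝ u (Matrix.toEuclideanCLM (𝕜 := ℝ) Aᵀ w) := by
    intro A u w
    have h1 : Matrix.toEuclideanCLM (𝕜 := ℝ) Aᵀ
        = ContinuousLinearMap.adjoint (Matrix.toEuclideanCLM (𝕜 := ℝ) A) := by
      rw [← ContinuousLinearMap.star_eq_adjoint, ← map_star]
      congr 1
    rw [h1, ContinuousLinearMap.adjoint_inner_right]
  -- positivity of the quadratic form
  have hquadpos : ∀ v : EuclideanSpace ℝ (Fin n), v ≠ 0 → (0:ℝ) < inner ℝ v (Pc v) := by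
    intro v hv
    have h := hPpd.re_dotProduct_pos (x := WithLp.equiv 2 _ v)
      (by simpa using fun h => hv ((WithLp.equiv 2 _).injective (by simpa using h)))
    rw [hPcdef, EuclideanSpace.inner_eq_star_dotProduct]
    simpa [Matrix.toLin'_apply, dotProduct_comm (P *ᵥ _)] using h
  have hquadnn : ∀ v : EuclideanSpace ℝ (Fin n), (0:ℝ) ≤ inner ℝ v (Pc v) := by
    intro v
    by_cases hv : v = 0
    · simp [hv]
    · exact (hquadpos v hv).le
  -- spectral bounds on the quadratic form
  set T := Matrix.toEuclideanLin P with hT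
  have hTsym : T.IsSymmetric := Matrix.isHermitian_iff_isSymmetric.mp hPpd.1
  have hTapp : ∀ w : EuclideanSpace ℝ (Fin n), T w = Pc w := by intro w; rfl
  set C := ‖Pc‖ with hC
  have hray_abs : ∀ w : EuclideanSpace ℝ (Fin n), w ≠ 0 →
      |RCLike.re (inner ℝ (T w) w : ℝ) / ‖w‖ ^ 2| ≤ C := by
    intro w hw
    have hw' : (0:ℝ) < ‖w‖ := norm_pos_iff.mpr hw
    rw [abs_div, abs_of_nonneg (by positivity : (0:ℝ) ≤ ‖w‖^2), div_le_iff₀ (by positivity)]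
    calc |RCLike.re (inner ℝ (T w) w : ℝ)| = |(inner ℝ (T w) w : ℝ)| := by norm_num
      _ ≤ ‖T w‖ * ‖w‖ := abs_real_inner_le_norm (T w) w
      _ = ‖Pc w‖ * ‖w‖ := by rw [hTapp]
      _ ≤ C * ‖w‖ * ‖w‖ := by
          have := Pc.le_opNorm w
          nlinarith [norm_nonneg w]
      _ = C * ‖w‖ ^ 2 := by ring
  have hbddA : BddAbove (Set.range fun x : {x : EuclideanSpace ℝ (Fin n) // x ≠ 0} =>
      RCLike.re (inner ℝ (T x) (x : EuclideanSpace ℝ (Fin n)) : ℝ) /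
        ‖(x : EuclideanSpace ℝ (Fin n))‖ ^ 2) := by
    refine ⟨C, ?_⟩
    rintro r ⟨⟨w, hw⟩, rfl⟩
    exact (le_abs_self _).trans (hray_abs w hw)
  have hbddB : BddBelow (Set.range fun x : {x : EuclideanSpace ℝ (Fin n) // x ≠ 0} =>
      RCLike.re (inner ℝ (T x) (x : EuclideanSpace ℝ (Fin n)) : ℝ) /
        ‖(x : EuclideanSpace ℝ (Fin n))‖ ^ 2) := by
    refine ⟨-C, ?_⟩
    rintro r ⟨⟨w, hw⟩, rfl⟩
    exact neg_le_of_abs_le (hray_abs w hw)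
  have hspec : spectrum ℝ T = spectrum ℝ P := Matrix.spectrum_toEuclideanLin
  have hsup_le : (⨆ x : {x : EuclideanSpace ℝ (Fin n) // x ≠ 0},
      RCLike.re (inner ℝ (T x) (x : EuclideanSpace ℝ (Fin n)) : ℝ) /
        ‖(x : EuclideanSpace ℝ (Fin n))‖ ^ 2) ≤ lamMax := by
    apply hlamMax.2
    rw [← hspec]
    exact Module.End.hasEigenvalue_iff_mem_spectrum.mp
      hTsym.hasEigenvalue_iSup_of_finiteDimensional
  have hle_inf : lamMin ≤ (⨅ x : {x : EuclideanSpace ℝ (Fin n) // x ≠ 0},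
      RCLike.re (inner ℝ (T x) (x : EuclideanSpace ℝ (Fin n)) : ℝ) /
        ‖(x : EuclideanSpace ℝ (Fin n))‖ ^ 2) := by
    apply hlamMin.2
    rw [← hspec]
    exact Module.End.hasEigenvalue_iff_mem_spectrum.mp
      hTsym.hasEigenvalue_iInf_of_finiteDimensional
  have hbounds : ∀ v : EuclideanSpace ℝ (Fin n),
      lamMin * ‖v‖ ^ 2 ≤ (inner ℝ v (Pc v) : ℝ) ∧ (inner ℝ v (Pc v) : ℝ) ≤ lamMax * ‖v‖ ^ 2 := by
    intro v
    by_cases hv : v = 0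
    · simp [hv]
    · have hv' : (0:ℝ) < ‖v‖ := norm_pos_iff.mpr hv
      have h1 := le_ciSup hbddA (⟨v, hv⟩ : {x : EuclideanSpace ℝ (Fin n) // x ≠ 0})
      have h2 := ciInf_le hbddB (⟨v, hv⟩ : {x : EuclideanSpace ℝ (Fin n) // x ≠ 0})
      have hre : RCLike.re (inner ℝ (T v) v : ℝ) = (inner ℝ v (Pc v) : ℝ) := by
        rw [hTapp, real_inner_comm]; norm_num
      constructor
      · have h3 := hle_inf.trans h2
        rw [hre] at h3
        rw [le_div_iff₀ (by positivity)] at h3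
        linarith
      · have h3 := h1.trans hsup_le
        rw [hre] at h3
        rw [div_le_iff₀ (by positivity)] at h3
        linarith
  -- composition lemmas
  have hmulPF : ∀ v : EuclideanSpace ℝ (Fin n), Pc (Fc v) = PFc v := by
    intro v
    rw [hPFcdef, _root_.map_mul]
    rfl
  -- Lyapunov identity on the quadratic form
  have hFPF : ∀ v : EuclideanSpace ℝ (Fin n),
      (inner ℝ (Fc v) (Pc (Fc v)) : ℝ) = inner ℝ v (Pc v) - ‖v‖ ^ 2 := by
    intro v
    have hFPFmat : Fᵀ * (P * F) = P - 1 := by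
      have : Fᵀ * P * F = P - 1 := by
        have := hLyap
        linear_combination (norm := module) this + (P : Matrix (Fin n) (Fin n) ℝ) - P
      rw [← this, Matrix.mul_assoc]
    calc (inner ℝ (Fc v) (Pc (Fc v)) : ℝ) = inner ℝ (Fc v) (PFc v) := by rw [hmulPF]
      _ = inner ℝ v (Matrix.toEuclideanCLM (𝕜 := ℝ) Fᵀ (PFc v)) := hadj F v (PFc v)
      _ = inner ℝ v (Matrix.toEuclideanCLM (𝕜 := ℝ) (Fᵀ * (P * F)) v) := by
          rw [_root_.map_mul]; rfl
      _ = inner ℝ v (Pc v - v) := by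
          rw [hFPFmat, map_sub, _root_.map_one, ContinuousLinearMap.sub_apply,
            ContinuousLinearMap.one_apply]
      _ = inner ℝ v (Pc v) - ‖v‖ ^ 2 := by
          rw [inner_sub_right, real_inner_self_eq_norm_sq]
  -- symmetry of P on inner products
  have hPsym' : ∀ u w : EuclideanSpace ℝ (Fin n), (inner ℝ (Pc u) w : ℝ) = inner ℝ u (Pc w) := by
    intro u w
    rw [hPcdef, hadj P u w, hPsymm.eq]
  -- lamMin ≥ 1, positivity facts
  have hlamMin1 : 1 ≤ lamMin := by
    have hmem : lamMin ∈ spectrum ℝ T := by rw [hspec]; exact hlamMin.1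
    have hev : Module.End.HasEigenvalue T lamMin :=
      Module.End.hasEigenvalue_iff_mem_spectrum.mpr hmem
    obtain ⟨v, hv⟩ := hev.exists_hasEigenvector
    have hvne : v ≠ 0 := hv.2
    have hv' : (0:ℝ) < ‖v‖ := norm_pos_iff.mpr hvne
    have happ : T v = lamMin • v := hv.apply_eq_smul
    have heq : (inner ℝ v (Pc v) : ℝ) = lamMin * ‖v‖ ^ 2 := by
      rw [← hTapp, happ, real_inner_smul_right, real_inner_self_eq_norm_sq]
    have hge : ‖v‖ ^ 2 ≤ (inner ℝ v (Pc v) : ℝ) := by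
      have h0 := hquadnn (Fc v)
      rw [hFPF v] at h0
      linarith
    rw [heq] at hge
    have hsq : (0:ℝ) < ‖v‖ ^ 2 := by positivity
    nlinarith [hsq]
  have hlamMinpos : (0:ℝ) < lamMin := by linarith
  have hlamMax1 : 1 ≤ lamMax := le_trans hlamMin1 (hlamMax.2 hlamMin.1)
  have hlamMaxpos : (0:ℝ) < lamMax := by linarith
  have hlampos : (0:ℝ) < lam := by
    rw [hlam]
    have : 1 / (2 * lamMax) ≤ 1 / 2 := by
      apply div_le_div_of_nonneg_left <;> linarith
    linarith
  have hbetann : (0:ℝ) ≤ beta := by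
    rw [hbeta]
    positivity
  -- the Lyapunov function
  set V : ℕ → ℝ := fun t => (inner ℝ (x t) (Pc (x t)) : ℝ) with hV
  have hVexp : ∀ t, V (t+1) = V t - ‖x t‖ ^ 2
      + 2 * (inner ℝ (PFc (x t)) (G t) : ℝ) + (inner ℝ (G t) (Pc (G t)) : ℝ) := by
    intro t
    have h1 : V (t+1) = (inner ℝ (Fc (x t) + G t) (Pc (Fc (x t) + G t)) : ℝ) := by
      show (inner ℝ (x (t+1)) (Pc (x (t+1))) : ℝ) = _
      rw [hx t]
    rw [h1, map_add, inner_add_left, inner_add_right, inner_add_right]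
    have c1 : (inner ℝ (Fc (x t)) (Pc (Fc (x t))) : ℝ) = V t - ‖x t‖ ^ 2 := hFPF (x t)
    have c2 : (inner ℝ (Fc (x t)) (Pc (G t)) : ℝ) = inner ℝ (PFc (x t)) (G t) := by
      rw [← hPsym', hmulPF]
    have c3 : (inner ℝ (G t) (Pc (Fc (x t))) : ℝ) = inner ℝ (PFc (x t)) (G t) := by
      rw [hmulPF, real_inner_comm]
    rw [c1, c2, c3]
    ring
  -- one-step bound
  have hVrec : ∀ t, V (t+1) ≤ lam * V t + beta * ‖G t‖ ^ 2 := by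
    intro t
    have h1 : (inner ℝ (PFc (x t)) (G t) : ℝ) ≤ ‖PFc‖ * ‖x t‖ * ‖G t‖ := by
      calc (inner ℝ (PFc (x t)) (G t) : ℝ) ≤ ‖PFc (x t)‖ * ‖G t‖ := real_inner_le_norm _ _
        _ ≤ ‖PFc‖ * ‖x t‖ * ‖G t‖ := by
            have := PFc.le_opNorm (x t)
            nlinarith [norm_nonneg (G t)]
    have h2 : (inner ℝ (G t) (Pc (G t)) : ℝ) ≤ ‖Pc‖ * ‖G t‖ ^ 2 := by
      calc (inner ℝ (G t) (Pc (G t)) : ℝ) ≤ ‖G t‖ * ‖Pc (G t)‖ := real_inner_le_norm _ _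
        _ ≤ ‖Pc‖ * ‖G t‖ ^ 2 := by
            have := Pc.le_opNorm (G t)
            nlinarith [norm_nonneg (G t)]
    have h3 : V t ≤ lamMax * ‖x t‖ ^ 2 := (hbounds (x t)).2
    have h4 : (0:ℝ) ≤ V t := hquadnn (x t)
    have hhalf : V t / (2 * lamMax) ≤ ‖x t‖ ^ 2 / 2 := by
      rw [div_le_div_iff₀ (by positivity) (by norm_num)]
      nlinarith
    have hlamV : lam * V t = V t - V t / (2 * lamMax) := by
      rw [hlam]
      field_simp
    rw [hVexp t, hlamV, hbeta]
    nlinarith [sq_nonneg (‖x t‖ - 2 * ‖PFc‖ * ‖G t‖), norm_nonneg (G t), norm_nonneg (x t),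
      norm_nonneg PFc]
  -- iterate
  have hsum : ∀ t : ℕ, (∑ l ∈ Finset.range (t+1), lam ^ (t + 1 - 1 - l) * ‖G l‖ ^ 2)
      = lam * (∑ l ∈ Finset.range t, lam ^ (t - 1 - l) * ‖G l‖ ^ 2) + ‖G t‖ ^ 2 := by
    intro t
    rw [Finset.sum_range_succ, Finset.mul_sum]
    congr 1
    · apply Finset.sum_congr rfl
      intro l hl
      have hl' : l < t := Finset.mem_range.mp hl
      have he : t + 1 - 1 - l = (t - 1 - l) + 1 := by omega
      rw [he, pow_succ]
      ring
    · simp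
  have hVbound : ∀ t, V t ≤ lam ^ t * V 0
      + beta * ∑ l ∈ Finset.range t, lam ^ (t - 1 - l) * ‖G l‖ ^ 2 := by
    intro t
    induction t with
    | zero => simp
    | succ t ih =>
      calc V (t+1) ≤ lam * V t + beta * ‖G t‖ ^ 2 := hVrec t
        _ ≤ lam * (lam ^ t * V 0 + beta * ∑ l ∈ Finset.range t, lam ^ (t - 1 - l) * ‖G l‖ ^ 2)
              + beta * ‖G t‖ ^ 2 := by
            have := mul_le_mul_of_nonneg_left ih hlampos.le
            linarith
        _ = lam ^ (t+1) * V 0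
              + beta * ∑ l ∈ Finset.range (t+1), lam ^ (t + 1 - 1 - l) * ‖G l‖ ^ 2 := by
            rw [hsum t, pow_succ]
            ring
  -- conclude
  intro t
  have hlow : lamMin * ‖x t‖ ^ 2 ≤ V t := (hbounds (x t)).1
  have hhigh : V 0 ≤ lamMax * ‖x 0‖ ^ 2 := (hbounds (x 0)).2
  have hsumnn : (0:ℝ) ≤ ∑ l ∈ Finset.range t, lam ^ (t - 1 - l) * ‖G l‖ ^ 2 := by
    apply Finset.sum_nonneg
    intro l _
    positivity
  have hmain : lamMin * ‖x t‖ ^ 2 ≤ lam ^ t * (lamMax * ‖x 0‖ ^ 2)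
      + beta * ∑ l ∈ Finset.range t, lam ^ (t - 1 - l) * ‖G l‖ ^ 2 := by
    have h1 := (hlow.trans (hVbound t))
    have h2 : lam ^ t * V 0 ≤ lam ^ t * (lamMax * ‖x 0‖ ^ 2) :=
      mul_le_mul_of_nonneg_left hhigh (by positivity)
    linarith
  have h3 : ‖x t‖ ^ 2 ≤ (lam ^ t * (lamMax * ‖x 0‖ ^ 2)
      + beta * ∑ l ∈ Finset.range t, lam ^ (t - 1 - l) * ‖G l‖ ^ 2) / lamMin := by
    rw [le_div_iff₀ hlamMinpos]
    linarith [hmain]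
  calc ‖x t‖ ^ 2 ≤ _ := h3
    _ = lam ^ t * lamMax * ‖x 0‖ ^ 2 / lamMin
        + (beta / lamMin) * ∑ l ∈ Finset.range t, lam ^ (t - 1 - l) * ‖G l‖ ^ 2 := by
      ring
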